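/- arXiv:2104.09353 — 2 statements merged into one kernel-verified Lean document; each statement's English description precedes it below -/
import Mathlib

section
/- Let z² ∉ {0,1}, μ a finitely additive measure on the boundary Ω, and f = P_z(μ) its Poisson transform. Then for every directed edge e⃗ pointing away from the base point o, z·f(τ(e⃗)) − f(ι(e⃗)) = (z²−1) z^{d(o,ι(e⃗))} μ(∂₊ e⃗). -/
open SimpleGraph

variable {V : Type*}

/-- The type of directed edges of a graph. -/
def DEdge (G : SimpleGraph V) : Type _ := {p : V × V // G.Adj p.1 p.2}

/-- Initial vertex of a directed edge. -/
def DEdge.ini {G : SimpleGraph V} (e : DEdge G) : V := e.1.1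

/-- Terminal vertex of a directed edge. -/
def DEdge.ter {G : SimpleGraph V} (e : DEdge G) : V := e.1.2

/-- Orientation reversal of a directed edge. -/
def DEdge.op {G : SimpleGraph V} (e : DEdge G) : DEdge G := ⟨(e.1.2, e.1.1), e.2.symm⟩

/-- The sum of an edge function over all directed edges with initial vertex `x`. -/
noncomputable def edgeSum (G : SimpleGraph V) (x : V) (F : DEdge G → ℂ) : ℂ :=
  ∑ᶠ (e : DEdge G) (_ : e.ini = x), F e

/-- The space `L(E⃗)`: edge functions `F` with
`F(e⃗) + F(e⃗^op) = z = Σ_{ι(e⃗')=x} F(e⃗')` for some common `z`. -/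
def memL (G : SimpleGraph V) (F : DEdge G → ℂ) : Prop :=
  ∃ z : ℂ, (∀ e : DEdge G, F e + F e.op = z) ∧ (∀ x : V, edgeSum G x F = z)

/-- A directed edge points away from the base point `o`. -/
def PointsAway (G : SimpleGraph V) (o : V) (e : DEdge G) : Prop :=
  G.dist o e.ter = G.dist o e.ini + 1

/-- The directed edges pointing away from `o`. -/
def DEdgeAway (G : SimpleGraph V) (o : V) : Type _ := {e : DEdge G // PointsAway G o e}

/-- Sum of a function on away-pointing edges over the edges with initial vertex `x`. -/
noncomputable def edgeSumAway (G : SimpleGraph V) (o : V) (x : V)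
    (F : DEdgeAway G o → ℂ) : ℂ :=
  ∑ᶠ (e : DEdgeAway G o) (_ : e.1.ini = x), F e

/-- The space `L(E⃗_o)`: functions on away-pointing edges with
`F(e⃗) = Σ_{ι(e⃗')=τ(e⃗)} F(e⃗')`. -/
def memLAway (G : SimpleGraph V) (o : V) (F : DEdgeAway G o → ℂ) : Prop :=
  ∀ e : DEdgeAway G o, F e = edgeSumAway G o e.1.ter F

/-- The boundary `Ω` of the tree, realized as the set of geodesic rays based at `o`. -/
def Ray (G : SimpleGraph V) (o : V) : Type _ :=
  {r : ℕ → V // r 0 = o ∧ (∀ n, G.Adj (r n) (r (n + 1))) ∧ ∀ n, G.dist o (r n) = n}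

/-- `Ω_o(v)`: the ends whose ray from `o` passes through `v`. -/
def raysThrough (G : SimpleGraph V) (o v : V) : Set (Ray G o) :=
  {ω | ∃ n, ω.1 n = v}

/-- The natural (compact, totally disconnected) topology on the boundary,
generated by the sets `Ω_o(v)`. -/
instance rayTopology (G : SimpleGraph V) (o : V) : TopologicalSpace (Ray G o) :=
  TopologicalSpace.generateFrom {S | ∃ v : V, S = raysThrough G o v}

/-- `∂₊ e⃗`: the set of ends reachable through the directed edge `e⃗`. -/
def dplus (G : SimpleGraph V) (o : V) (e : DEdge G) : Set (Ray G o) :=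
  {ω | ∃ N, ∀ n ≥ N, G.dist e.ter (ω.1 n) + 1 = G.dist e.ini (ω.1 n)}

/-- A finitely additive measure on the clopen subsets of a space. -/
def IsFAMeasure {Z : Type*} [TopologicalSpace Z] (μ : Set Z → ℂ) : Prop :=
  μ ∅ = 0 ∧ ∀ U U' : Set Z, IsClopen U → IsClopen U' →
    μ (U ∪ U') + μ (U ∩ U') = μ U + μ U'

/-- The tree Laplacian: the average of `f` over the neighbors of `x`. -/
noncomputable def lap (G : SimpleGraph V) [G.LocallyFinite] (f : V → ℂ) (x : V) : ℂ :=
  (G.degree x : ℂ)⁻¹ * ∑ y ∈ G.neighborFinset x, f y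

/-- The horocycle bracket `⟨·,·⟩ : X × Ω → ℤ` for base point `o`: the eventual
value of `n - d(x, ω_n)` along the ray `ω`. -/
def IsHorocycleBracket (G : SimpleGraph V) (o : V) (brk : V → Ray G o → ℤ) : Prop :=
  ∀ (x : V) (ω : Ray G o), ∃ N : ℕ, ∀ n : ℕ, n ≥ N → brk x ω = (n : ℤ) - (G.dist x (ω.1 n) : ℤ)

/-- The Poisson transform `P_z(μ)(x) = ∫_Ω z^{⟨x,ω⟩} dμ(ω)`, i.e. the pairing of
`μ` with the locally constant function `ω ↦ z^{⟨x,ω⟩}`. -/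
noncomputable def poisson (G : SimpleGraph V) (o : V) (brk : V → Ray G o → ℤ)
    (z : ℂ) (μ : Set (Ray G o) → ℂ) (x : V) : ℂ :=
  ∑ᶠ c : ℂ, c * μ {ω : Ray G o | z ^ brk x ω = c}

section Aux
open SimpleGraph Walk
variable {V : Type*} {G : SimpleGraph V}


lemma tree_path_length (ht : G.IsTree) {a b : V} (p : G.Walk a b) (hp : p.IsPath) :
    p.length = G.dist a b := by
  obtain ⟨q, hq, hql⟩ := ht.isConnected.exists_path_of_dist a b
  rw [(ht.existsUnique_path a b).unique hp hq, hql]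

lemma tree_dist_split (ht : G.IsTree) {a b y : V} (p : G.Walk a b) (hp : p.IsPath)
    (hy : y ∈ p.support) : G.dist a y + G.dist y b = G.dist a b := by
  classical
  have h1 := tree_path_length ht _ (hp.takeUntil hy)
  have h2 := tree_path_length ht _ (hp.dropUntil hy)
  have h3 : (p.takeUntil y hy).length + (p.dropUntil y hy).length = p.length := by
    rw [← length_append, take_spec]
  rw [tree_path_length ht p hp, h1, h2] at h3
  exact h3

lemma isPath_append {a b c : V} {p : G.Walk a b} {q : G.Walk b c} (hp : p.IsPath)
    (hq : q.IsPath) (h : ∀ y ∈ p.support, y ∈ q.support → y = b) : (p.append q).IsPath := by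
  rw [isPath_def, support_append]
  refine List.Nodup.append hp.support_nodup hq.support_nodup.tail ?_
  intro y hyp hyq
  have hyb : y = b := h y hyp (List.mem_of_mem_tail hyq)
  subst hyb
  have := hq.support_nodup
  rw [support_eq_cons] at this
  exact (List.nodup_cons.mp this).1 hyq

lemma isPath_concat {a b c : V} {p : G.Walk a b} (hp : p.IsPath) (h : G.Adj b c)
    (hc : c ∉ p.support) : (p.concat h).IsPath := by
  rw [concat_eq_append]
  refine isPath_append hp ?_ ?_
  · rw [isPath_def, support_cons, support_nil]
    simp [List.nodup_cons, h.ne]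
  · intro y hyp hyq
    rw [support_cons, support_nil] at hyq
    rcases List.mem_pair.mp hyq with rfl | rfl
    · rfl
    · exact absurd hyp hc

lemma tree_dist_adj_ne (ht : G.IsTree) {a b : V} (hab : G.Adj a b) (w : V) :
    G.dist w a ≠ G.dist w b := by
  classical
  intro hEq
  obtain ⟨p, hp, hpl⟩ := ht.isConnected.exists_path_of_dist w a
  by_cases hb : b ∈ p.support
  · have hsplit := tree_dist_split ht p hp hb
    have hba : G.dist b a = 1 := dist_eq_one_iff_adj.mpr hab.symm
    omega
  · have hcat := isPath_concat hp hab hb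
    obtain ⟨q, hq, hql⟩ := ht.isConnected.exists_path_of_dist w b
    have h2 := (ht.existsUnique_path w b).unique hcat hq
    have h3 : (p.concat hab).length = q.length := by rw [h2]
    rw [length_concat, hpl, hql] at h3
    omega

lemma tree_dist_adj (ht : G.IsTree) {a b : V} (hab : G.Adj a b) (w : V) :
    G.dist w b = G.dist w a + 1 ∨ G.dist w a = G.dist w b + 1 := by
  have h1 : G.dist w b ≤ G.dist w a + G.dist a b := ht.isConnected.dist_triangle
  have h2 : G.dist w a ≤ G.dist w b + G.dist b a := ht.isConnected.dist_triangle
  rw [dist_eq_one_iff_adj.mpr hab] at h1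
  rw [dist_eq_one_iff_adj.mpr hab.symm] at h2
  have h3 := tree_dist_adj_ne ht hab w
  omega

/-- The walk along a ray from position `i` to position `i+k`. -/
def rayWalk (G : SimpleGraph V) (o : V) (ω : Ray G o) (i : ℕ) :
    (k : ℕ) → G.Walk (ω.1 i) (ω.1 (i + k))
  | 0 => Walk.nil
  | k+1 => (rayWalk G o ω i k).concat (ω.2.2.1 (i+k))

lemma rayWalk_length (G : SimpleGraph V) (o : V) (ω : Ray G o) (i : ℕ) :
    ∀ k, (rayWalk G o ω i k).length = k
  | 0 => rfl
  | k+1 => by rw [rayWalk, length_concat, rayWalk_length G o ω i k]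

lemma ray_inj {o : V} (ω : Ray G o) {j j' : ℕ} (h : ω.1 j = ω.1 j') : j = j' := by
  have h1 := ω.2.2.2 j
  have h2 := ω.2.2.2 j'
  rw [h] at h1
  omega

lemma rayWalk_support (G : SimpleGraph V) (o : V) (ω : Ray G o) (i : ℕ) :
    ∀ k, ∀ y, y ∈ (rayWalk G o ω i k).support ↔ ∃ j, i ≤ j ∧ j ≤ i + k ∧ ω.1 j = y
  | 0, y => by
    rw [rayWalk, support_nil]
    constructor
    · intro h
      rcases List.mem_singleton.mp h with rfl
      exact ⟨i, le_refl i, by omega, rfl⟩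
    · rintro ⟨j, h1, h2, rfl⟩
      have : j = i := by omega
      subst this
      exact List.mem_singleton.mpr rfl
  | k+1, y => by
    rw [rayWalk, support_concat, List.mem_append, List.mem_singleton]
    rw [rayWalk_support G o ω i k]
    constructor
    · rintro (⟨j, h1, h2, rfl⟩ | rfl)
      · exact ⟨j, h1, by omega, rfl⟩
      · exact ⟨i + (k+1), by omega, by omega, rfl⟩
    · rintro ⟨j, h1, h2, rfl⟩
      by_cases hj : j ≤ i + k
      · exact Or.inl ⟨j, h1, hj, rfl⟩
      · have : j = i + (k+1) := by omega
        subst this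
        exact Or.inr rfl

lemma rayWalk_isPath (G : SimpleGraph V) (o : V) (ω : Ray G o) (i : ℕ) :
    ∀ k, (rayWalk G o ω i k).IsPath
  | 0 => IsPath.nil
  | k+1 => by
    refine isPath_concat (rayWalk_isPath G o ω i k) _ ?_
    rw [rayWalk_support]
    rintro ⟨j, h1, h2, hj⟩
    have := ray_inj ω hj
    omega

lemma ray_dist (ht : G.IsTree) {o : V} (ω : Ray G o) (i k : ℕ) :
    G.dist (ω.1 i) (ω.1 (i + k)) = k := by
  rw [← tree_path_length ht _ (rayWalk_isPath G o ω i k), rayWalk_length]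

/-- Claim C: if the distance to `x` decreases along the ray at step `n`, then `n+1 <= d(o,x)`. -/
lemma ray_dist_dec (ht : G.IsTree) {o : V} (ω : Ray G o) (x : V) (n : ℕ)
    (hdec : G.dist x (ω.1 (n+1)) + 1 = G.dist x (ω.1 n)) : n + 1 ≤ G.dist o x := by
  classical
  obtain ⟨p, hp, hpl⟩ := ht.isConnected.exists_path_of_dist (ω.1 (n+1)) x
  have hnp : ω.1 n ∉ p.support := by
    intro hmem
    have hsplit := tree_dist_split ht p hp hmem
    have h1 : G.dist (ω.1 (n+1)) (ω.1 n) = 1 := dist_eq_one_iff_adj.mpr (ω.2.2.1 n).symm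
    rw [SimpleGraph.dist_comm (G := G) (u := x) (v := ω.1 (n+1))] at hdec
    rw [SimpleGraph.dist_comm (G := G) (u := x) (v := ω.1 n)] at hdec
    omega
  set r : G.Walk (ω.1 0) (ω.1 (n+1)) :=
    (rayWalk G o ω 0 (n+1)).copy rfl (by rw [Nat.zero_add]) with hr_def
  have hrpath : r.IsPath := by
    rw [hr_def, Walk.isPath_copy]; exact rayWalk_isPath G o ω 0 (n+1)
  have hrlen : r.length = n + 1 := by rw [hr_def, Walk.length_copy, rayWalk_length]
  have hrsupp : ∀ y, y ∈ r.support ↔ ∃ j, j ≤ n + 1 ∧ ω.1 j = y := by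
    intro y
    rw [hr_def, Walk.support_copy, rayWalk_support]
    constructor
    · rintro ⟨j, h1, h2, rfl⟩; exact ⟨j, by omega, rfl⟩
    · rintro ⟨j, h1, rfl⟩; exact ⟨j, by omega, by omega, rfl⟩
  have hr : ∀ y ∈ r.support, y ∈ p.support → y = ω.1 (n+1) := by
    intro y hy hyp
    rw [hrsupp] at hy
    obtain ⟨j, hj2, rfl⟩ := hy
    by_cases hjn : j = n + 1
    · rw [hjn]
    · exfalso
      have hjle : j ≤ n := by omega
      have harith : j + (n+1-j) = n+1 := by omega
      have hcast : ω.1 (j + (n+1-j)) = ω.1 (n+1) := by rw [harith]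
      have hcopy : ((rayWalk G o ω j (n+1-j)).copy rfl hcast).IsPath := by
        rw [Walk.isPath_copy]; exact rayWalk_isPath G o ω j _
      have hto : (p.takeUntil (ω.1 j) hyp).IsPath := hp.takeUntil hyp
      have hEqW : ((rayWalk G o ω j (n+1-j)).copy rfl hcast).reverse
          = p.takeUntil (ω.1 j) hyp :=
        (ht.existsUnique_path (ω.1 (n+1)) (ω.1 j)).unique hcopy.reverse hto
      have hmem : ω.1 n ∈ (((rayWalk G o ω j (n+1-j)).copy rfl hcast).reverse).support := by
        rw [Walk.support_reverse, List.mem_reverse, Walk.support_copy, rayWalk_support]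
        exact ⟨n, by omega, by omega, rfl⟩
      rw [hEqW] at hmem
      exact hnp (Walk.support_takeUntil_subset _ _ hmem)
  have happ : (r.append p).IsPath := isPath_append hrpath hp hr
  have hlen := tree_path_length ht _ happ
  rw [Walk.length_append, hrlen, hpl] at hlen
  have ho : ω.1 0 = o := ω.2.1
  rw [ho] at hlen
  rw [SimpleGraph.dist_comm (G := G) (u := ω.1 (n+1)) (v := x)] at hlen
  omega


lemma brk_step (ht : G.IsTree) {o : V} (ω : Ray G o) (x : V) {n : ℕ} (hn : G.dist o x ≤ n) :
    G.dist x (ω.1 (n+1)) = G.dist x (ω.1 n) + 1 := by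
  rcases tree_dist_adj ht (ω.2.2.1 n) x with h | h
  · exact h
  · exfalso
    have := ray_dist_dec ht ω x n (by omega)
    omega

lemma brk_formula (ht : G.IsTree) {o : V} {brk : V → Ray G o → ℤ}
    (hbrk : IsHorocycleBracket G o brk) (x : V) (ω : Ray G o)
    {n : ℕ} (hn : G.dist o x ≤ n) : brk x ω = (n : ℤ) - G.dist x (ω.1 n) := by
  obtain ⟨N, hN⟩ := hbrk x ω
  have hconst : ∀ m, n ≤ m → ((m:ℤ) - G.dist x (ω.1 m) = (n:ℤ) - G.dist x (ω.1 n)) := by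
    intro m hm
    induction m, hm using Nat.le_induction with
    | base => rfl
    | succ m hm ih =>
      rw [brk_step ht ω x (le_trans hn hm)]
      push_cast
      omega
  rw [hN (max n N) (le_max_right _ _), hconst (max n N) (le_max_left _ _)]

lemma tree_parent_unique (ht : G.IsTree) {o u u' v : V} {m : ℕ} (hu : G.Adj u v)
    (hu' : G.Adj u' v) (hdu : G.dist o u = m) (hdu' : G.dist o u' = m)
    (hdv : G.dist o v = m+1) : u = u' := by
  classical
  obtain ⟨p, hp, hpl⟩ := ht.isConnected.exists_path_of_dist o u
  obtain ⟨p', hp', hpl'⟩ := ht.isConnected.exists_path_of_dist o u'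
  have hvp : v ∉ p.support := fun hmem => by
    have := tree_dist_split ht p hp hmem
    omega
  have hvp' : v ∉ p'.support := fun hmem => by
    have := tree_dist_split ht p' hp' hmem
    omega
  have h1 : (p.concat hu).IsPath := isPath_concat hp hu hvp
  have h2 : (p'.concat hu').IsPath := isPath_concat hp' hu' hvp'
  have hEq : p.concat hu = p'.concat hu' := (ht.existsUnique_path o v).unique h1 h2
  have humem : u ∈ (p'.concat hu').support := by
    rw [← hEq, Walk.support_concat, List.mem_append]
    exact Or.inl (Walk.end_mem_support p)
  rw [Walk.support_concat, List.mem_append, List.mem_singleton] at humem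
  rcases humem with h | h
  · have hs := tree_dist_split ht p' hp' h
    have h0 : G.dist u u' = 0 := by omega
    exact (ht.isConnected.dist_eq_zero_iff).mp h0
  · exfalso
    rw [h] at hdu
    omega

lemma tree_key_dist (ht : G.IsTree) {o u v : V} (huv : G.Adj u v) {m : ℕ}
    (hdu : G.dist o u = m) (hdv : G.dist o v = m+1) {w : V} (hw : G.dist o w = m+1)
    (hwv : w ≠ v) : G.dist v w = G.dist u w + 1 := by
  classical
  rcases tree_dist_adj ht huv w with h | h
  · rw [SimpleGraph.dist_comm (G := G) (u := v) (v := w),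
      SimpleGraph.dist_comm (G := G) (u := u) (v := w)]
    exact h
  · exfalso
    obtain ⟨p, hp, hpl⟩ := ht.isConnected.exists_path_of_dist v w
    have hcomm1 : G.dist u w = G.dist w u := SimpleGraph.dist_comm
    have hcomm2 : G.dist v w = G.dist w v := SimpleGraph.dist_comm
    have hup : u ∉ p.support := fun hmem => by
      have hs := tree_dist_split ht p hp hmem
      have h1 : G.dist v u = 1 := dist_eq_one_iff_adj.mpr huv.symm
      omega
    obtain ⟨q, hq, hql⟩ := ht.isConnected.exists_path_of_dist o u
    have hvq : v ∉ q.support := fun hmem => by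
      have := tree_dist_split ht q hq hmem
      omega
    have hq' : (q.concat huv).IsPath := isPath_concat hq huv hvq
    have hcond : ∀ y ∈ (q.concat huv).support, y ∈ p.support → y = v := by
      intro y hy hyp
      rw [Walk.support_concat, List.mem_append,
        List.mem_singleton] at hy
      rcases hy with hyq | rfl
      · exfalso
        by_cases hyu : y = u
        · subst hyu; exact hup hyp
        · have hto : (p.takeUntil y hyp).IsPath := hp.takeUntil hyp
          have hd : (q.dropUntil y hyq).IsPath := hq.dropUntil hyq
          have hvnot : v ∉ ((q.dropUntil y hyq).reverse).support := by
            rw [Walk.support_reverse, List.mem_reverse]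
            exact fun hc => hvq (Walk.support_dropUntil_subset _ _ hc)
          have hcons : (Walk.cons huv.symm ((q.dropUntil y hyq).reverse)).IsPath :=
            (hd.reverse).cons hvnot
          have hEq2 : Walk.cons huv.symm ((q.dropUntil y hyq).reverse)
              = p.takeUntil y hyp :=
            (ht.existsUnique_path v y).unique hcons hto
          have humem : u ∈ (p.takeUntil y hyp).support := by
            rw [← hEq2, Walk.support_cons]
            refine List.mem_cons_of_mem _ ?_
            rw [Walk.support_reverse, List.mem_reverse]
            exact Walk.end_mem_support _
          exact hup (Walk.support_takeUntil_subset _ _ humem)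
      · rfl
    have happ := isPath_append hq' hp hcond
    have hlen := tree_path_length ht _ happ
    rw [Walk.length_append, Walk.length_concat, hql, hpl, hw] at hlen
    have h0 : G.dist v w = 0 := by omega
    exact hwv ((ht.isConnected.dist_eq_zero_iff).mp h0).symm

end Aux

/-- For `z² ∉ {0,1}`, a finitely additive measure `μ` on `Ω`, and
`f = P_z(μ)`: for every directed edge `e⃗` pointing away from `o`,
`z·f(τ(e⃗)) - f(ι(e⃗)) = (z²-1) z^{d(o,ι(e⃗))} μ(∂₊ e⃗)`. -/
theorem stmt_13 {V : Type*} (G : SimpleGraph V) (htree : G.IsTree) [G.LocallyFinite]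
    (o : V) (brk : V → Ray G o → ℤ) (hbrk : IsHorocycleBracket G o brk)
    (z : ℂ) (hz0 : z ^ 2 ≠ 0) (hz1 : z ^ 2 ≠ 1)
    (μ : Set (Ray G o) → ℂ) (hμ : IsFAMeasure μ) :
    ∀ e : DEdge G, PointsAway G o e →
      z * poisson G o brk z μ e.ter - poisson G o brk z μ e.ini
        = (z ^ 2 - 1) * z ^ G.dist o e.ini * μ (dplus G o e) := by
  classical
  intro e he
  obtain ⟨ht, hz⟩ : G.IsTree ∧ z ≠ 0 := ⟨htree, fun h => hz0 (by rw [h]; ring)⟩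
  set m := G.dist o e.ini with hm
  have hdov : G.dist o e.ter = m + 1 := he
  have huv : G.Adj e.ini e.ter := e.2
  -- the clopen set S of rays through e.ter
  set S : Set (Ray G o) := {ω : Ray G o | ω.1 (m+1) ∈ ({e.ter} : Set V)} with hS_def
  have hmemS : ∀ ω : Ray G o, ω ∈ S ↔ ω.1 (m+1) = e.ter := fun ω => Iff.rfl
  -- open/clopen coordinate sets
  have hopen_fiber : ∀ (N : ℕ) (T : Set V), IsOpen {ω : Ray G o | ω.1 N ∈ T} := by
    intro N T
    have hU : {ω : Ray G o | ω.1 N ∈ T} = ⋃ w ∈ T, {ω : Ray G o | ω.1 N = w} := by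
      ext ω; simp
    rw [hU]
    refine isOpen_biUnion ?_
    intro w hw
    by_cases hdw : G.dist o w = N
    · have heq : {ω : Ray G o | ω.1 N = w} = raysThrough G o w := by
        ext ω
        constructor
        · intro h; exact ⟨N, h⟩
        · rintro ⟨n, hn⟩
          have h2 := ω.2.2.2 n
          rw [hn, hdw] at h2
          rw [← h2] at hn
          exact hn
      rw [heq]
      exact TopologicalSpace.isOpen_generateFrom_of_mem ⟨w, rfl⟩
    · have heq : {ω : Ray G o | ω.1 N = w} = (∅ : Set (Ray G o)) := by
        ext ω
        simp only [Set.mem_setOf_eq, Set.mem_empty_iff_false, iff_false]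
        intro h
        exact hdw (by rw [← h]; exact ω.2.2.2 N)
      rw [heq]
      exact isOpen_empty
  have hclopen_fiber : ∀ (N : ℕ) (T : Set V), IsClopen {ω : Ray G o | ω.1 N ∈ T} := by
    intro N T
    constructor
    · rw [← isOpen_compl_iff]
      have hc : {ω : Ray G o | ω.1 N ∈ T}ᶜ = {ω : Ray G o | ω.1 N ∈ Tᶜ} := by
        ext ω; simp
      rw [hc]
      exact hopen_fiber N Tᶜ
    · exact hopen_fiber N T
  have hSclopen : IsClopen S := hclopen_fiber (m+1) {e.ter}
  -- bracket formulas at coordinate m+1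
  have hbrk_u : ∀ ω : Ray G o, brk e.ini ω = ((m+1 : ℕ) : ℤ) - G.dist e.ini (ω.1 (m+1)) :=
    fun ω => brk_formula ht hbrk e.ini ω (by omega)
  have hbrk_v : ∀ ω : Ray G o, brk e.ter ω = ((m+1 : ℕ) : ℤ) - G.dist e.ter (ω.1 (m+1)) :=
    fun ω => brk_formula ht hbrk e.ter ω (by rw [hdov])
  have hduv : G.dist e.ini e.ter = 1 := dist_eq_one_iff_adj.mpr huv
  have hS_brk_v : ∀ ω ∈ S, brk e.ter ω = ((m+1 : ℕ) : ℤ) := by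
    intro ω hω
    rw [hbrk_v ω, (hmemS ω).mp hω, SimpleGraph.dist_self]
    omega
  have hS_brk_u : ∀ ω ∈ S, brk e.ini ω = ((m : ℕ) : ℤ) := by
    intro ω hω
    rw [hbrk_u ω, (hmemS ω).mp hω, hduv]
    push_cast
    omega
  have hoff : ∀ ω : Ray G o, ω ∉ S → brk e.ter ω = brk e.ini ω - 1 := by
    intro ω hω
    have hwv : ω.1 (m+1) ≠ e.ter := fun h => hω ((hmemS ω).mpr h)
    have hkey := tree_key_dist ht huv hm.symm hdov (ω.2.2.2 (m+1)) hwv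
    rw [hbrk_u ω, hbrk_v ω, hkey]
    push_cast
    omega
  -- dplus = S
  have hdplus : dplus G o e = S := by
    ext ω
    constructor
    · rintro ⟨N, hN⟩
      rw [hmemS]
      by_contra hnot
      have h1 := hN (max N (m+1)) (le_max_left _ _)
      have h2 : brk e.ter ω = ((max N (m+1) : ℕ) : ℤ) - G.dist e.ter (ω.1 (max N (m+1))) :=
        brk_formula ht hbrk e.ter ω (by rw [hdov]; omega)
      have h3 : brk e.ini ω = ((max N (m+1) : ℕ) : ℤ) - G.dist e.ini (ω.1 (max N (m+1))) :=
        brk_formula ht hbrk e.ini ω (by omega)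
      have h4 := hoff ω (fun hc => hnot ((hmemS ω).mp hc))
      omega
    · intro hv
      have hv' : ω.1 (m+1) = e.ter := (hmemS ω).mp hv
      have hadj : G.Adj (ω.1 m) (ω.1 (m+1)) := ω.2.2.1 m
      rw [hv'] at hadj
      have hpar : ω.1 m = e.ini :=
        tree_parent_unique ht hadj huv (ω.2.2.2 m) hm.symm hdov
      refine ⟨m+1, fun n hn => ?_⟩
      obtain ⟨k, rfl⟩ : ∃ k, n = (m+1) + k := ⟨n - (m+1), by omega⟩
      have hA : G.dist (ω.1 (m+1)) (ω.1 ((m+1)+k)) = k := ray_dist ht ω (m+1) k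
      have hB : G.dist (ω.1 m) (ω.1 (m + (k+1))) = k+1 := ray_dist ht ω m (k+1)
      rw [hv'] at hA
      rw [hpar] at hB
      have harith : m + (k+1) = (m+1) + k := by omega
      rw [harith] at hB
      rw [hA, hB]
  -- finitely additive splitting along S
  have hsplit : ∀ A : Set (Ray G o), IsClopen A → μ A = μ (A ∩ S) + μ (A ∩ Sᶜ) := by
    intro A hA
    have h1 : IsClopen (A ∩ S) := hA.inter hSclopen
    have h2 : IsClopen (A ∩ Sᶜ) := hA.inter hSclopen.compl
    have h3 := hμ.2 _ _ h1 h2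
    have hU : (A ∩ S) ∪ (A ∩ Sᶜ) = A := by
      ext x; by_cases hx : x ∈ S <;> simp [hx]
    have hI : (A ∩ S) ∩ (A ∩ Sᶜ) = (∅ : Set (Ray G o)) := by
      ext x; by_cases hx : x ∈ S <;> simp [hx]
    rw [hU, hI, hμ.1, add_zero] at h3
    exact h3
  -- clopenness of the level sets
  have hLv_clopen : ∀ c : ℂ, IsClopen {ω : Ray G o | z ^ brk e.ter ω = c} := by
    intro c
    have : {ω : Ray G o | z ^ brk e.ter ω = c}
        = {ω : Ray G o | ω.1 (m+1) ∈ {w : V | z ^ (((m+1 : ℕ) : ℤ) - G.dist e.ter w) = c}} := by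
      ext ω
      simp only [Set.mem_setOf_eq]
      rw [hbrk_v ω]
    rw [this]
    exact hclopen_fiber _ _
  have hLu_clopen : ∀ c : ℂ, IsClopen {ω : Ray G o | z ^ brk e.ini ω = c} := by
    intro c
    have : {ω : Ray G o | z ^ brk e.ini ω = c}
        = {ω : Ray G o | ω.1 (m+1) ∈ {w : V | z ^ (((m+1 : ℕ) : ℤ) - G.dist e.ini w) = c}} := by
      ext ω
      simp only [Set.mem_setOf_eq]
      rw [hbrk_u ω]
    rw [this]
    exact hclopen_fiber _ _
  -- bounds on the bracket and finite supports
  have hbound : ∀ x : V, G.dist o x ≤ m + 1 →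
      ∀ ω : Ray G o, brk x ω ∈ Finset.Icc (-((m+1 : ℕ) : ℤ)) ((m+1 : ℕ) : ℤ) := by
    intro x hx ω
    have hf := brk_formula ht hbrk x ω (n := m+1) (by omega)
    have htri : G.dist x (ω.1 (m+1)) ≤ G.dist x o + G.dist o (ω.1 (m+1)) :=
      ht.isConnected.dist_triangle
    have hco : G.dist x o = G.dist o x := SimpleGraph.dist_comm
    have hcoord := ω.2.2.2 (m+1)
    rw [Finset.mem_Icc]
    rw [hf]
    omega
  have hK : ∀ (x : V), G.dist o x ≤ m + 1 → ∀ B : Set (Ray G o),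
      (Function.support fun c : ℂ => c * μ ({ω : Ray G o | z ^ brk x ω = c} ∩ B)).Finite := by
    intro x hx B
    have hsub : (Function.support fun c : ℂ => c * μ ({ω : Ray G o | z ^ brk x ω = c} ∩ B)) ⊆
        ↑((Finset.Icc (-((m+1:ℕ):ℤ)) ((m+1:ℕ):ℤ)).image (fun k => z ^ k)) := by
      intro c hc
      rw [Function.mem_support] at hc
      have hne : ({ω : Ray G o | z ^ brk x ω = c} ∩ B).Nonempty := by
        rw [Set.nonempty_iff_ne_empty]
        intro hemp
        rw [hemp, hμ.1, mul_zero] at hc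
        exact hc rfl
      obtain ⟨ω, hω1, -⟩ := hne
      simp only [Finset.coe_image, Set.mem_image, Finset.mem_coe]
      exact ⟨brk x ω, hbound x hx ω, hω1⟩
    exact Set.Finite.subset (Finset.finite_toSet _) hsub
  have hKv := hK e.ter (le_of_eq hdov)
  have hKu := hK e.ini (by omega)
  set T : ℂ := ∑ᶠ c : ℂ, c * μ ({ω : Ray G o | z ^ brk e.ini ω = c} ∩ Sᶜ) with hT_def
  have hsplit_v : poisson G o brk z μ e.ter
      = (∑ᶠ c : ℂ, c * μ ({ω : Ray G o | z ^ brk e.ter ω = c} ∩ S))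
        + ∑ᶠ c : ℂ, c * μ ({ω : Ray G o | z ^ brk e.ter ω = c} ∩ Sᶜ) := by
    rw [poisson, ← finsum_add_distrib (hKv S) (hKv Sᶜ)]
    refine finsum_congr fun c => ?_
    rw [← mul_add, ← hsplit _ (hLv_clopen c)]
  have hsplit_u : poisson G o brk z μ e.ini
      = (∑ᶠ c : ℂ, c * μ ({ω : Ray G o | z ^ brk e.ini ω = c} ∩ S)) + T := by
    rw [poisson, hT_def, ← finsum_add_distrib (hKu S) (hKu Sᶜ)]
    refine finsum_congr fun c => ?_
    rw [← mul_add, ← hsplit _ (hLu_clopen c)]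
  have hSv : (∑ᶠ c : ℂ, c * μ ({ω : Ray G o | z ^ brk e.ter ω = c} ∩ S))
      = z ^ ((m+1 : ℕ) : ℤ) * μ S := by
    have h0 : ∀ c : ℂ, c ≠ z ^ ((m+1 : ℕ) : ℤ) →
        c * μ ({ω : Ray G o | z ^ brk e.ter ω = c} ∩ S) = 0 := by
      intro c hc
      have hemp : {ω : Ray G o | z ^ brk e.ter ω = c} ∩ S = ∅ := by
        ext ω
        simp only [Set.mem_inter_iff, Set.mem_setOf_eq, Set.mem_empty_iff_false, iff_false]
        rintro ⟨h1, h2⟩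
        rw [hS_brk_v ω h2] at h1
        exact hc h1.symm
      rw [hemp, hμ.1, mul_zero]
    rw [finsum_eq_single _ _ h0]
    have hSS : {ω : Ray G o | z ^ brk e.ter ω = z ^ ((m+1 : ℕ) : ℤ)} ∩ S = S := by
      apply Set.inter_eq_right.mpr
      intro ω hω
      rw [Set.mem_setOf_eq, hS_brk_v ω hω]
    rw [hSS]
  have hSu : (∑ᶠ c : ℂ, c * μ ({ω : Ray G o | z ^ brk e.ini ω = c} ∩ S))
      = z ^ ((m : ℕ) : ℤ) * μ S := by
    have h0 : ∀ c : ℂ, c ≠ z ^ ((m : ℕ) : ℤ) →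
        c * μ ({ω : Ray G o | z ^ brk e.ini ω = c} ∩ S) = 0 := by
      intro c hc
      have hemp : {ω : Ray G o | z ^ brk e.ini ω = c} ∩ S = ∅ := by
        ext ω
        simp only [Set.mem_inter_iff, Set.mem_setOf_eq, Set.mem_empty_iff_false, iff_false]
        rintro ⟨h1, h2⟩
        rw [hS_brk_u ω h2] at h1
        exact hc h1.symm
      rw [hemp, hμ.1, mul_zero]
    rw [finsum_eq_single _ _ h0]
    have hSS : {ω : Ray G o | z ^ brk e.ini ω = z ^ ((m : ℕ) : ℤ)} ∩ S = S := by
      apply Set.inter_eq_right.mpr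
      intro ω hω
      rw [Set.mem_setOf_eq, hS_brk_u ω hω]
    rw [hSS]
  have hoffset : ∀ c : ℂ, {ω : Ray G o | z ^ brk e.ter ω = c} ∩ Sᶜ
      = {ω : Ray G o | z ^ brk e.ini ω = z * c} ∩ Sᶜ := by
    intro c
    ext ω
    simp only [Set.mem_inter_iff, Set.mem_setOf_eq, Set.mem_compl_iff]
    constructor
    · rintro ⟨h1, h2⟩
      refine ⟨?_, h2⟩
      rw [hoff ω h2, zpow_sub₀ hz, zpow_one, div_eq_iff hz] at h1
      rw [h1, mul_comm]
    · rintro ⟨h1, h2⟩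
      refine ⟨?_, h2⟩
      rw [hoff ω h2, zpow_sub₀ hz, zpow_one, div_eq_iff hz, h1, mul_comm]
  have hTv : (∑ᶠ c : ℂ, c * μ ({ω : Ray G o | z ^ brk e.ter ω = c} ∩ Sᶜ)) = z⁻¹ * T := by
    have h1 : ∀ c : ℂ, c * μ ({ω : Ray G o | z ^ brk e.ter ω = c} ∩ Sᶜ)
        = z⁻¹ * ((z * c) * μ ({ω : Ray G o | z ^ brk e.ini ω = z * c} ∩ Sᶜ)) := by
      intro c
      rw [hoffset c, ← mul_assoc, ← mul_assoc, inv_mul_cancel₀ hz, one_mul]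
    rw [finsum_congr h1]
    have h2 := finsum_comp_equiv
      (⟨fun c => z * c, fun c => z⁻¹ * c, fun c => by field_simp, fun c => by field_simp⟩ : ℂ ≃ ℂ)
      (f := fun d : ℂ => z⁻¹ * (d * μ ({ω : Ray G o | z ^ brk e.ini ω = d} ∩ Sᶜ)))
    have h3 : (∑ᶠ c : ℂ, z⁻¹ * ((z * c) * μ ({ω : Ray G o | z ^ brk e.ini ω = z * c} ∩ Sᶜ)))
        = ∑ᶠ d : ℂ, z⁻¹ * (d * μ ({ω : Ray G o | z ^ brk e.ini ω = d} ∩ Sᶜ)) := h2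
    rw [h3, hT_def, ← mul_finsum _ _]
  rw [hsplit_v, hsplit_u, hSv, hSu, hTv, hdplus]
  rw [zpow_natCast, zpow_natCast]
  have hzz : z * z⁻¹ = 1 := mul_inv_cancel₀ hz
  calc z * (z ^ (m+1) * μ S + z⁻¹ * T) - (z ^ m * μ S + T)
      = (z * z⁻¹) * T - T + (z * z ^ (m+1) - z ^ m) * μ S := by ring
    _ = (z ^ 2 - 1) * z ^ m * μ S := by rw [hzz]; ring
end

section
/- Assume z² ∉ {0,1}. Let f : X → ℂ and μ⃗ : E⃗_o → ℂ satisfy z f(τ(e⃗)) − f(ι(e⃗)) = (z²−1) z^{d(o,ι(e⃗))} μ⃗(e⃗) for all e⃗ ∈ E⃗_o. Then μ⃗ satisfies the compatibility conditions μ⃗(e⃗) = Σ_{ι(g⃗)=τ(e⃗)} μ⃗(g⃗) for all e⃗ ∈ E⃗_o if and only if f satisfies Σ_{ι(e⃗)=v} f(τ(e⃗)) = (z + q_v z^{-1}) f(v) for all vertices v ≠ o. -/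
open SimpleGraph

variable {V : Type*}

open Finset

-- adjacent vertices have different distances to o in a tree
lemma tree_adj_dist_ne (G : SimpleGraph V) (htree : G.IsTree) (o u v : V)
    (h : G.Adj u v) : G.dist o u ≠ G.dist o v := by
  intro heq
  obtain ⟨p, hp, hpl⟩ := htree.isConnected.exists_path_of_dist o u
  have hvns : v ∉ p.support := by
    intro hv
    obtain ⟨q, r, rfl⟩ := Walk.mem_support_iff_exists_append.mp hv
    have h1 : G.dist o v ≤ q.length := dist_le q
    have h2 : G.dist v u ≤ r.length := dist_le r
    have h3 : G.dist v u = 1 := dist_eq_one_iff_adj.mpr h.symm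
    have h4 : (q.append r).length = q.length + r.length := Walk.length_append q r
    omega
  have hw : (p.concat h).IsPath := by
    rw [Walk.isPath_def, Walk.support_concat]
    rw [Walk.isPath_def] at hp
    simp [List.nodup_append, hp, hvns]
    exact fun a ha hav => hvns (hav ▸ ha)
  obtain ⟨q, hq, hql⟩ := htree.isConnected.exists_path_of_dist o v
  obtain ⟨P, -, hP⟩ := htree.existsUnique_path o v
  have e1 := hP _ hw
  have e2 := hP _ hq
  have : (p.concat h).length = q.length := by rw [e1, e2]
  rw [Walk.length_concat] at this
  omega

lemma tree_adj_dist (G : SimpleGraph V) (htree : G.IsTree) (o u v : V)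
    (h : G.Adj u v) : G.dist o v = G.dist o u + 1 ∨ G.dist o u = G.dist o v + 1 := by
  have h1 : G.dist o v ≤ G.dist o u + G.dist u v := htree.isConnected.dist_triangle
  have h2 : G.dist o u ≤ G.dist o v + G.dist v u := htree.isConnected.dist_triangle
  have h3 : G.dist u v = 1 := dist_eq_one_iff_adj.mpr h
  have h4 : G.dist v u = 1 := dist_eq_one_iff_adj.mpr h.symm
  have h5 := tree_adj_dist_ne G htree o u v h
  omega

lemma tree_parent_exists (G : SimpleGraph V) (htree : G.IsTree) (o v : V)
    (hv : v ≠ o) : ∃ u, G.Adj u v ∧ G.dist o v = G.dist o u + 1 := by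
  have hpos : 0 < G.dist o v :=
    htree.isConnected.pos_dist_of_ne (Ne.symm hv)
  obtain ⟨p, hp, hpl⟩ := htree.isConnected.exists_path_of_dist o v
  set q := p.reverse with hq
  have hql : q.length = G.dist o v := by simp [hq, hpl]
  clear_value q
  clear hq
  cases q with
  | nil => simp only [Walk.length_nil] at hql; omega
  | @cons _ u _ h r =>
    refine ⟨u, h.symm, ?_⟩
    have hrl : r.length + 1 = G.dist o v := by simpa using hql
    have h1 : G.dist o u ≤ r.length := by
      rw [SimpleGraph.dist_comm]; exact dist_le r
    have h2 : G.dist o v ≤ G.dist o u + 1 := by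
      have := htree.isConnected.dist_triangle (u := o) (v := u) (w := v)
      have h3 : G.dist u v = 1 := dist_eq_one_iff_adj.mpr h.symm
      omega
    omega

lemma tree_parent_unique_s14 (G : SimpleGraph V) (htree : G.IsTree) (o v u u' : V)
    (hadj : G.Adj u v) (hadj' : G.Adj u' v)
    (hd : G.dist o v = G.dist o u + 1) (hd' : G.dist o v = G.dist o u' + 1) :
    u = u' := by
  obtain ⟨p, hp, hpl⟩ := htree.isConnected.exists_path_of_dist o u
  obtain ⟨p', hp', hpl'⟩ := htree.isConnected.exists_path_of_dist o u'
  have hvp : ∀ (w : V) (pw : G.Walk o w), pw.length = G.dist o w →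
      G.dist o v = G.dist o w + 1 → v ∉ pw.support := by
    intro w pw hpwl hdw hvmem
    obtain ⟨q, r, rfl⟩ := Walk.mem_support_iff_exists_append.mp hvmem
    have h1 : G.dist o v ≤ q.length := dist_le q
    have h4 : (q.append r).length = q.length + r.length := Walk.length_append q r
    omega
  have hw : (p.concat hadj).IsPath := by
    rw [Walk.isPath_def, Walk.support_concat]
    rw [Walk.isPath_def] at hp
    simp [List.nodup_append, hp, hvp u p hpl hd]
    exact fun a ha hav => hvp u p hpl hd (hav ▸ ha)
  have hw' : (p'.concat hadj').IsPath := by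
    rw [Walk.isPath_def, Walk.support_concat]
    rw [Walk.isPath_def] at hp'
    simp [List.nodup_append, hp', hvp u' p' hpl' hd']
    exact fun a ha hav => hvp u' p' hpl' hd' (hav ▸ ha)
  obtain ⟨P, -, hP⟩ := htree.existsUnique_path o v
  have heq : p.concat hadj = p'.concat hadj' := by rw [hP _ hw, hP _ hw']
  have hu_mem : u ∈ (p'.concat hadj').support := by
    rw [← heq, Walk.support_concat]
    simp [Walk.end_mem_support]
  rw [Walk.support_concat] at hu_mem
  have huv : u ≠ v := by intro h; rw [h] at hd; omega
  have hu_mem' : u ∈ p'.support := by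
    rcases List.mem_append.mp hu_mem with h | h
    · exact h
    · simp at h; exact absurd h huv
  obtain ⟨q, r, hqr⟩ := Walk.mem_support_iff_exists_append.mp hu_mem'
  have h1 : G.dist o u ≤ q.length := dist_le q
  have h4 : q.length + r.length = p'.length := by rw [hqr]; exact (Walk.length_append q r).symm
  have hr0 : r.length = 0 := by omega
  exact Walk.eq_of_length_eq_zero hr0

lemma away_finite (G : SimpleGraph V) [G.LocallyFinite] (o v : V) :
    ({e : DEdgeAway G o | e.1.ini = v}).Finite := by
  apply Set.Finite.of_finite_image (f := fun e => e.1.ter)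
  · apply Set.Finite.subset (Set.toFinite (G.neighborSet v))
    rintro y ⟨e, he, rfl⟩
    have : G.Adj e.1.ini e.1.ter := e.1.2
    rw [he] at this
    exact this
  · rintro e he e' he' hee
    simp only [Set.mem_setOf_eq] at he he'
    apply Subtype.ext; apply Subtype.ext
    exact Prod.ext (he.trans he'.symm) hee

lemma edgeSumAway_eq_sum (G : SimpleGraph V) [G.LocallyFinite] (o v : V)
    (F : DEdgeAway G o → ℂ) :
    edgeSumAway G o v F = ∑ e ∈ (away_finite G o v).toFinset, F e :=
  finsum_mem_eq_finite_toFinset_sum F (away_finite G o v)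

lemma sum_ter (G : SimpleGraph V) [G.LocallyFinite] (o v : V) (g : V → ℂ) :
    ∑ e ∈ (away_finite G o v).toFinset, g e.1.ter
      = ∑ y ∈ (G.neighborFinset v).filter (fun y => G.dist o y = G.dist o v + 1), g y := by
  apply Finset.sum_bij' (i := fun e _ => e.1.ter)
    (j := fun y hy => (⟨⟨(v, y), by
      simp only [mem_filter, mem_neighborFinset] at hy; exact hy.1⟩, by
      simp only [mem_filter, mem_neighborFinset] at hy
      exact hy.2⟩ : DEdgeAway G o))
  case hi =>
    intro e he
    have he' := (Set.Finite.mem_toFinset _).mp he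
    replace he : e.1.ini = v := he'
    have hadj : G.Adj e.1.ini e.1.ter := e.1.2
    have hpa : G.dist o e.1.ter = G.dist o e.1.ini + 1 := e.2
    rw [he] at hadj hpa
    simp [mem_filter, mem_neighborFinset, hadj, hpa]
  case hj =>
    intro y hy
    exact (Set.Finite.mem_toFinset _).mpr rfl
  case left_neg =>
    intro e he
    have he' := (Set.Finite.mem_toFinset _).mp he
    replace he : e.1.ini = v := he'
    apply Subtype.ext; apply Subtype.ext
    exact Prod.ext he.symm rfl
  case right_neg => intro y hy; rfl
  case h => intro e he; rfl

lemma key_lemma (G : SimpleGraph V) (htree : G.IsTree) [G.LocallyFinite]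
    (o : V) (z : ℂ) (hz0 : z ^ 2 ≠ 0) (hz1 : z ^ 2 ≠ 1)
    (f : V → ℂ) (m : DEdgeAway G o → ℂ)
    (hbeta : ∀ e : DEdgeAway G o,
      z * f e.1.ter - f e.1.ini = (z ^ 2 - 1) * z ^ G.dist o e.1.ini * m e)
    (v : V) (e : DEdgeAway G o) (he : e.1.ter = v) :
    (m e = edgeSumAway G o v m) ↔
      (∑ y ∈ G.neighborFinset v, f y
        = (z + ((G.degree v : ℂ) - 1) * z⁻¹) * f v) := by
  classical
  have hz : z ≠ 0 := fun h => hz0 (by rw [h]; ring)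
  have hz1' : z ^ 2 - 1 ≠ 0 := sub_ne_zero.mpr hz1
  set u := e.1.ini with hu
  have hadj : G.Adj u v := by rw [← he]; exact e.1.2
  have hdist : G.dist o v = G.dist o u + 1 := by rw [← he]; exact e.2
  have hpow : z ^ G.dist o v = z ^ G.dist o u * z := by rw [hdist, pow_succ]
  set C := (G.neighborFinset v).filter (fun y => G.dist o y = G.dist o v + 1) with hC
  have huC : u ∉ C := by
    simp only [hC, mem_filter]
    rintro ⟨-, h⟩
    omega
  have hNC : G.neighborFinset v = insert u C := by
    ext y
    simp only [hC, mem_insert, mem_filter, mem_neighborFinset]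
    constructor
    · intro hy
      rcases tree_adj_dist G htree o v y hy with h | h
      · right; exact ⟨hy, h⟩
      · left; exact tree_parent_unique_s14 G htree o v y u hy.symm hadj h hdist
    · rintro (rfl | ⟨hy, -⟩)
      · exact hadj.symm
      · exact hy
  have hcard : C.card + 1 = G.degree v := by
    rw [degree, hNC, card_insert_of_notMem huC]
  set T := (away_finite G o v).toFinset with hT
  have hTC : ∀ g : V → ℂ, ∑ e' ∈ T, g e'.1.ter = ∑ y ∈ C, g y := by
    intro g; rw [hT, hC]; exact sum_ter G o v g
  have hTcard : (T.card : ℂ) = (C.card : ℂ) := by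
    have := hTC (fun _ => (1 : ℂ))
    simpa using this
  have hbeta' : ∀ e' ∈ T, (z ^ 2 - 1) * z ^ G.dist o v * m e'
      = z * f e'.1.ter - f v := by
    intro e' he'
    rw [hT, Set.Finite.mem_toFinset] at he'
    have hb := hbeta e'
    have hini : e'.1.ini = v := he'
    rw [hini] at hb
    exact hb.symm
  have hK : (z ^ 2 - 1) * z ^ G.dist o v ≠ 0 :=
    mul_ne_zero hz1' (pow_ne_zero _ hz)
  rw [edgeSumAway_eq_sum, ← hT]
  rw [← mul_right_inj' hK]
  have hLHS : (z ^ 2 - 1) * z ^ G.dist o v * m e = z * (z * f v - f u) := by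
    have hb := hbeta e
    rw [he, ← hu] at hb
    calc (z ^ 2 - 1) * z ^ G.dist o v * m e
        = z * ((z ^ 2 - 1) * z ^ G.dist o u * m e) := by rw [hpow]; ring
      _ = z * (z * f v - f u) := by rw [← hb]
  have hRHS : (z ^ 2 - 1) * z ^ G.dist o v * ∑ e' ∈ T, m e'
      = z * (∑ y ∈ C, f y) - (C.card : ℂ) * f v := by
    calc (z ^ 2 - 1) * z ^ G.dist o v * ∑ e' ∈ T, m e'
        = ∑ e' ∈ T, (z ^ 2 - 1) * z ^ G.dist o v * m e' := Finset.mul_sum _ _ _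
      _ = ∑ e' ∈ T, (z * f e'.1.ter - f v) := Finset.sum_congr rfl hbeta'
      _ = z * (∑ e' ∈ T, f e'.1.ter) - (T.card : ℂ) * f v := by
          rw [Finset.sum_sub_distrib, Finset.sum_const, ← Finset.mul_sum, nsmul_eq_mul]
      _ = z * (∑ y ∈ C, f y) - (C.card : ℂ) * f v := by rw [hTC f, hTcard]
  rw [hLHS, hRHS, hNC, Finset.sum_insert huC]
  have hdeg : ((G.degree v : ℂ) - 1) = (C.card : ℂ) := by
    rw [← hcard]; push_cast; ring
  rw [hdeg]
  set S := ∑ y ∈ C, f y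
  set c := (C.card : ℂ)
  constructor
  · intro h
    field_simp
    linear_combination -h
  · intro h
    field_simp at h
    linear_combination -h

/-- Assume `z² ∉ {0,1}` and let `f : X → ℂ`, `μ⃗ : E⃗_o → ℂ` satisfy
`z f(τ(e⃗)) - f(ι(e⃗)) = (z²-1) z^{d(o,ι(e⃗))} μ⃗(e⃗)` for all `e⃗ ∈ E⃗_o`.
Then `μ⃗` satisfies the compatibility conditions
`μ⃗(e⃗) = Σ_{ι(g⃗)=τ(e⃗)} μ⃗(g⃗)` iff
`Σ_{ι(e⃗)=v} f(τ(e⃗)) = (z + q_v z⁻¹) f(v)` for all `v ≠ o`. -/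
theorem stmt_14 {V : Type*} (G : SimpleGraph V) (htree : G.IsTree) [G.LocallyFinite]
    (o : V) (z : ℂ) (hz0 : z ^ 2 ≠ 0) (hz1 : z ^ 2 ≠ 1)
    (f : V → ℂ) (m : DEdgeAway G o → ℂ)
    (hbeta : ∀ e : DEdgeAway G o,
      z * f e.1.ter - f e.1.ini = (z ^ 2 - 1) * z ^ G.dist o e.1.ini * m e) :
    (∀ e : DEdgeAway G o, m e = edgeSumAway G o e.1.ter m) ↔
    (∀ v : V, v ≠ o →
      ∑ y ∈ G.neighborFinset v, f y
        = (z + ((G.degree v : ℂ) - 1) * z⁻¹) * f v) := by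
  constructor
  · intro hcompat v hv
    obtain ⟨u, hadj, hd⟩ := tree_parent_exists G htree o v hv
    exact (key_lemma G htree o z hz0 hz1 f m hbeta v
      (⟨⟨(u, v), hadj⟩, hd⟩ : DEdgeAway G o) rfl).mp (hcompat _)
  · intro heq e
    have hv : e.1.ter ≠ o := by
      intro h
      have h2 := e.2
      rw [PointsAway, h] at h2
      simp [SimpleGraph.dist_self] at h2
    exact (key_lemma G htree o z hz0 hz1 f m hbeta e.1.ter e rfl).mpr (heq _ hv)
end
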